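/- Let y_0 < y_1 < ⋯ < y_P be real numbers, A = [y_0,y_P], A_p = [y_{p−1},y_p], and let z_0, …, z_P be real numbers. For p = 1,…,P let L_p : A → A_p be a homeomorphism with L_p(y_0) = y_{p−1} and L_p(y_P) = y_p, and let F_p : A × ℝ → ℝ have the form F_p(y,z) = α_p·z + q_p(y) with q_p : A → ℝ continuous and F_p(y_0,z_0) = z_{p−1}, F_p(y_P,z_P) = z_p. Let φ : [0,∞) → [0,∞) be nondecreasing with φ(t) < t and limsup_{s→t⁺} φ(s) < t for all t > 0, and suppose each F_p is a Suzuki-type generalized φ-contraction in the second variable: for all y ∈ A and z,t ∈ ℝ, (1/2)·|z − F_p(y,z)| ≤ |z − t| implies |F_p(y,z) − F_p(y,t)| ≤ φ(max{|z−t|, |z − F_p(y,z)|, |t − F_p(y,t)|}). Let 𝒞₀(A) be the set of continuous h : A → ℝ with h(y_0) = z_0 and h(y_P) = z_P, equipped with the sup metric, and define the operator 𝕋 on 𝒞₀(A) by (𝕋h)(y) = F_p(L_p^{−1}(y), h(L_p^{−1}(y))) for y ∈ A_p. Then for all g,h ∈ 𝒞₀(A), (1/2)·‖g − 𝕋g‖_∞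 ≤ ‖g − h‖_∞ implies ‖𝕋g − 𝕋h‖_∞ ≤ φ(max{‖g − h‖_∞, ‖g − 𝕋g‖_∞, ‖h − 𝕋h‖_∞}), i.e. 𝕋 is a Suzuki-type generalized φ-contraction on (𝒞₀(A), ‖·‖_∞). -/

import Mathlib

open Filter

/-- The sup distance `‖g − h‖_∞ = sup_{x ∈ A} |g(x) − h(x)|` on a set `A ⊆ ℝ`. -/
noncomputable def supDistOn (A : Set ℝ) (g h : ℝ → ℝ) : ℝ :=
  ⨆ x : A, |g x - h x|


lemma cover_aux (y : ℕ → ℝ) : ∀ P : ℕ, 1 ≤ P → ∀ x : ℝ, y 0 ≤ x → x ≤ y P →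
    ∃ p, 1 ≤ p ∧ p ≤ P ∧ y (p - 1) ≤ x ∧ x ≤ y p := by
  intro P
  induction P with
  | zero => omega
  | succ n ih =>
    intro _ x hx0 hxP
    by_cases hn : 1 ≤ n
    · by_cases hxn : x ≤ y n
      · obtain ⟨p, h1, h2, h3, h4⟩ := ih hn x hx0 hxn
        exact ⟨p, h1, by omega, h3, h4⟩
      · exact ⟨n + 1, by omega, le_rfl, by simpa using (le_of_not_ge hxn), hxP⟩
    · have hn0 : n = 0 := by omega
      subst hn0
      exact ⟨1, le_rfl, le_rfl, by simpa using hx0, hxP⟩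

lemma affine_contract (φ : ℝ → ℝ) (hlt : ∀ t > 0, φ t < t) (α Q : ℝ)
    (hS : ∀ s t : ℝ, (1 / 2) * |s - (α * s + Q)| ≤ |s - t| →
      |(α * s + Q) - (α * t + Q)| ≤
        φ (max |s - t| (max |s - (α * s + Q)| |t - (α * t + Q)|))) :
    ∀ d > 0, |α| * d ≤ φ d := by
  by_cases hα : α = 1
  · exfalso
    subst hα
    have hQ : (0:ℝ) ≤ |Q| := abs_nonneg Q
    have hQ1 : (0:ℝ) ≤ |Q| + 1 := by linarith
    have h := hS 0 (|Q| + 1) (by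
      rw [show (0:ℝ) - (1 * 0 + Q) = -Q by ring,
        show (0:ℝ) - (|Q| + 1) = -(|Q| + 1) by ring, abs_neg, abs_neg,
        abs_of_nonneg hQ1]
      linarith)
    have e1 : |(1 * 0 + Q) - (1 * (|Q| + 1) + Q)| = |Q| + 1 := by
      rw [show (1 * 0 + Q) - (1 * (|Q| + 1) + Q) = -(|Q| + 1) by ring, abs_neg,
        abs_of_nonneg hQ1]
    have e2 : |(0:ℝ) - (1 * 0 + Q)| = |Q| := by
      rw [show (0:ℝ) - (1 * 0 + Q) = -Q by ring, abs_neg]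
    have e3 : |(|Q| + 1) - (1 * (|Q| + 1) + Q)| = |Q| := by
      rw [show (|Q| + 1) - (1 * (|Q| + 1) + Q) = -Q by ring, abs_neg]
    have e4 : |(0:ℝ) - (|Q| + 1)| = |Q| + 1 := by
      rw [show (0:ℝ) - (|Q| + 1) = -(|Q| + 1) by ring, abs_neg, abs_of_nonneg hQ1]
    rw [e1, e2, e3, e4, max_self, max_eq_left (by linarith)] at h
    have := hlt (|Q| + 1) (by linarith)
    linarith
  · have h1α : (1:ℝ) - α ≠ 0 := sub_ne_zero.mpr (fun hh => hα hh.symm)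
    have hc0 : 0 < |1 - α| := abs_pos.mpr h1α
    have hS' : ∀ a b : ℝ, (1 / 2) * (|1 - α| * |a|) ≤ |a - b| →
        |α| * |a - b| ≤ φ (max |a - b| (max (|1 - α| * |a|) (|1 - α| * |b|))) := by
      intro a b hpre
      have e1 : (Q / (1 - α) + a) - (α * (Q / (1 - α) + a) + Q) = (1 - α) * a := by
        field_simp
        ring
      have e2 : (Q / (1 - α) + b) - (α * (Q / (1 - α) + b) + Q) = (1 - α) * b := by
        field_simp
        ring
      have e3 : (Q / (1 - α) + a) - (Q / (1 - α) + b) = a - b := by ring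
      have e4 : (α * (Q / (1 - α) + a) + Q) - (α * (Q / (1 - α) + b) + Q) = α * (a - b) := by
        ring
      have h := hS (Q / (1 - α) + a) (Q / (1 - α) + b) (by rw [e1, e3, abs_mul]; exact hpre)
      rw [e1, e2, e3, e4, abs_mul, abs_mul, abs_mul] at h
      exact h
    have habs : |1 - α| ≤ 1 + |α| := by
      calc |1 - α| = |1 + -α| := by ring_nf
        _ ≤ |(1:ℝ)| + |(-α)| := abs_add_le 1 (-α)
        _ = 1 + |α| := by rw [abs_one, abs_neg]
    have hc2 : |1 - α| ≤ 2 := by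
      by_contra hcgt
      push_neg at hcgt
      have ha : abs ((1:ℝ) / |1 - α|) = 1 / |1 - α| := abs_of_pos (by positivity)
      have hca : |1 - α| * abs ((1:ℝ) / |1 - α|) = 1 := by rw [ha]; field_simp
      have hb : abs ((1:ℝ) / |1 - α| - 1) = 1 - 1 / |1 - α| := by
        rw [abs_of_nonpos (by
          have h2 : (1:ℝ) / |1 - α| ≤ 1 / 2 := by
            apply one_div_le_one_div_of_le <;> linarith
          linarith)]
        ring
      have hcb : |1 - α| * abs ((1:ℝ) / |1 - α| - 1) = |1 - α| - 1 := by
        rw [hb]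
        field_simp
      have hab : abs ((1:ℝ) / |1 - α| - (1 / |1 - α| - 1)) = 1 := by
        rw [show (1:ℝ) / |1 - α| - (1 / |1 - α| - 1) = 1 by ring, abs_one]
      have h := hS' (1 / |1 - α|) (1 / |1 - α| - 1) (by rw [hca, hab]; linarith)
      rw [hca, hcb, hab, mul_one] at h
      rw [max_eq_right (by linarith : (1:ℝ) ≤ |1 - α| - 1),
        max_eq_right (by linarith : (1:ℝ) ≤ |1 - α| - 1)] at h
      have hφ := hlt (|1 - α| - 1) (by linarith)
      linarith
    intro d hd
    have ha : abs (d / |1 - α|) = d / |1 - α| := abs_of_pos (by positivity)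
    have hca : |1 - α| * abs (d / |1 - α|) = d := by rw [ha]; field_simp
    have hab : abs (d / |1 - α| - (d / |1 - α| - d)) = d := by
      rw [show d / |1 - α| - (d / |1 - α| - d) = d by ring, abs_of_pos hd]
    have hcb : |1 - α| * abs (d / |1 - α| - d) ≤ d := by
      have e : |1 - α| * abs (d / |1 - α| - d) = abs (|1 - α| * (d / |1 - α| - d)) := by
        rw [abs_mul, abs_of_nonneg hc0.le]
      rw [e, show |1 - α| * (d / |1 - α| - d) = d * (1 - |1 - α|) by field_simp,
        abs_mul, abs_of_pos hd]
      have h1 : abs (1 - |1 - α|) ≤ 1 := abs_le.mpr ⟨by linarith, by linarith⟩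
      nlinarith
    have h := hS' (d / |1 - α|) (d / |1 - α| - d) (by rw [hca, hab]; linarith)
    rw [hca, hab, max_eq_left hcb, max_self] at h
    exact h

lemma le_supDistOn {A : Set ℝ} {g h : ℝ → ℝ}
    (hb : BddAbove (Set.range fun x : A => |g x - h x|)) {x : ℝ} (hx : x ∈ A) :
    |g x - h x| ≤ supDistOn A g h :=
  le_ciSup hb ⟨x, hx⟩

lemma supDistOn_le {A : Set ℝ} {g h : ℝ → ℝ} {a : ℝ} (ha : 0 ≤ a)
    (H : ∀ x ∈ A, |g x - h x| ≤ a) : supDistOn A g h ≤ a :=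
  Real.iSup_le (fun x => H x x.2) ha

/-- Key estimate in the proof of Theorem 3.12 of the paper: the
Read–Bajraktarević operator `𝕋` associated with maps `F_p(y,z) = α_p z + q_p(y)`
that are Suzuki-type generalized φ-contractions in the second variable is itself
a Suzuki-type generalized φ-contraction on `(𝒞₀(A), ‖·‖_∞)`. -/
theorem RB_operator_stgpc (P : ℕ) (hP : 1 ≤ P)
    (y z : ℕ → ℝ) (hy : ∀ i < P, y i < y (i + 1))
    (L : ℕ → ℝ → ℝ) (α : ℕ → ℝ) (q : ℕ → ℝ → ℝ) (F : ℕ → ℝ → ℝ → ℝ)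
    (hF : ∀ p x t, F p x t = α p * t + q p x)
    (hq : ∀ p ∈ Finset.Icc 1 P, ContinuousOn (q p) (Set.Icc (y 0) (y P)))
    (hLbij : ∀ p ∈ Finset.Icc 1 P,
      Set.BijOn (L p) (Set.Icc (y 0) (y P)) (Set.Icc (y (p - 1)) (y p)))
    (hLcont : ∀ p ∈ Finset.Icc 1 P, ContinuousOn (L p) (Set.Icc (y 0) (y P)))
    (hLend : ∀ p ∈ Finset.Icc 1 P, L p (y 0) = y (p - 1) ∧ L p (y P) = y p)
    (hFend : ∀ p ∈ Finset.Icc 1 P, F p (y 0) (z 0) = z (p - 1) ∧ F p (y P) (z P) = z p)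
    (φ : ℝ → ℝ) (hφ_mono : Monotone φ)
    (hφ_nonneg : ∀ t ≥ 0, 0 ≤ φ t)
    (hφ_lt : ∀ t > 0, φ t < t)
    (hφ_limsup : ∀ t > 0, Filter.limsup φ (nhdsWithin t (Set.Ioi t)) < t)
    (hSuz : ∀ p ∈ Finset.Icc 1 P, ∀ x ∈ Set.Icc (y 0) (y P), ∀ s t : ℝ,
      (1 / 2) * |s - F p x s| ≤ |s - t| →
        |F p x s - F p x t| ≤
          φ (max |s - t| (max |s - F p x s| |t - F p x t|)))
    (C0 : Set (ℝ → ℝ))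
    (hC0 : C0 = {h : ℝ → ℝ | ContinuousOn h (Set.Icc (y 0) (y P)) ∧
      h (y 0) = z 0 ∧ h (y P) = z P})
    (𝕋 : (ℝ → ℝ) → (ℝ → ℝ))
    (h𝕋mem : ∀ h ∈ C0, 𝕋 h ∈ C0)
    (h𝕋 : ∀ h ∈ C0, ∀ p ∈ Finset.Icc 1 P, ∀ x ∈ Set.Icc (y 0) (y P),
      𝕋 h (L p x) = F p x (h x)) :
    ∀ g ∈ C0, ∀ h ∈ C0,
      (1 / 2) * supDistOn (Set.Icc (y 0) (y P)) g (𝕋 g) ≤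
          supDistOn (Set.Icc (y 0) (y P)) g h →
        supDistOn (Set.Icc (y 0) (y P)) (𝕋 g) (𝕋 h) ≤
          φ (max (supDistOn (Set.Icc (y 0) (y P)) g h)
              (max (supDistOn (Set.Icc (y 0) (y P)) g (𝕋 g))
                (supDistOn (Set.Icc (y 0) (y P)) h (𝕋 h)))) := by
  intro g hg h hh _hpre
  have hgc : ContinuousOn g (Set.Icc (y 0) (y P)) := by rw [hC0] at hg; exact hg.1
  have hhc : ContinuousOn h (Set.Icc (y 0) (y P)) := by rw [hC0] at hh; exact hh.1
  -- monotonicity of y up to P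
  have hmono : ∀ i, i ≤ P → y 0 ≤ y i := by
    intro i
    induction i with
    | zero => intro _; exact le_rfl
    | succ n ih =>
      intro hn
      exact le_trans (ih (by omega)) (hy n (by omega)).le
  have hy0P : y 0 ≤ y P := hmono P le_rfl
  have hy0mem : y 0 ∈ Set.Icc (y 0) (y P) := ⟨le_rfl, hy0P⟩
  -- boundedness of |g - h| on A
  have hbdd : BddAbove (Set.range fun x : Set.Icc (y 0) (y P) => |g x - h x|) := by
    have hc : ContinuousOn (fun x => |g x - h x|) (Set.Icc (y 0) (y P)) :=
      (hgc.sub hhc).abs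
    have := (isCompact_Icc.image_of_continuousOn hc).bddAbove
    rwa [Set.image_eq_range] at this
  set D := supDistOn (Set.Icc (y 0) (y P)) g h with hD
  have hD0 : 0 ≤ D :=
    le_trans (abs_nonneg _) (le_supDistOn hbdd hy0mem)
  set M := max D (max (supDistOn (Set.Icc (y 0) (y P)) g (𝕋 g))
      (supDistOn (Set.Icc (y 0) (y P)) h (𝕋 h))) with hM
  have hM0 : 0 ≤ M := le_trans hD0 (le_max_left _ _)
  have hφM : 0 ≤ φ M := hφ_nonneg M hM0
  apply supDistOn_le hφM
  intro x hx
  obtain ⟨p, hp1, hpP, hx1, hx2⟩ := cover_aux y P hP x hx.1 hx.2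
  have hp : p ∈ Finset.Icc 1 P := Finset.mem_Icc.mpr ⟨hp1, hpP⟩
  obtain ⟨w, hw, hLw⟩ := (hLbij p hp).surjOn ⟨hx1, hx2⟩
  have eg : 𝕋 g x = α p * g w + q p w := by
    rw [← hLw, h𝕋 g hg p hp w hw, hF]
  have eh : 𝕋 h x = α p * h w + q p w := by
    rw [← hLw, h𝕋 h hh p hp w hw, hF]
  have ediff : |𝕋 g x - 𝕋 h x| = |α p| * |g w - h w| := by
    rw [eg, eh, show α p * g w + q p w - (α p * h w + q p w) = α p * (g w - h w) by ring,
      abs_mul]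
  rw [ediff]
  have hgw : |g w - h w| ≤ D := le_supDistOn hbdd hw
  have halpha : ∀ d > 0, |α p| * d ≤ φ d := by
    apply affine_contract φ hφ_lt (α p) (q p (y 0))
    intro s t hst
    have := hSuz p hp (y 0) hy0mem s t (by rw [hF]; exact hst)
    simpa only [hF] using this
  rcases eq_or_lt_of_le hD0 with hDz | hDpos
  · have hgw0 : |g w - h w| = 0 := le_antisymm (hDz ▸ hgw) (abs_nonneg _)
    rw [hgw0, mul_zero]
    exact hφM
  · calc |α p| * |g w - h w| ≤ |α p| * D :=
        mul_le_mul_of_nonneg_left hgw (abs_nonneg _)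
      _ ≤ φ D := halpha D hDpos
      _ ≤ φ M := hφ_mono (le_max_left _ _)
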